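/- The maximal quantum winning probability of the GYNI game equals the maximal classical winning probability: ω_q = ω_c = max_x [q(x) + q(x̄)], for any input distribution q. -/

import Mathlib

open ComplexOrder

/-- Tensor product over the `N` parties of local matrices. -/
def tensProd {N : ℕ} {d : Fin N → ℕ}
    (M : (i : Fin N) → Matrix (Fin (d i)) (Fin (d i)) ℂ) :
    Matrix ((i : Fin N) → Fin (d i)) ((i : Fin N) → Fin (d i)) ℂ :=
  Matrix.of fun u v => ∏ i, M i (u i) (v i)

namespace GYNI

open Matrix

set_option linter.unusedSectionVars false

/-! ### General tensor products -/

/-- General tensor product of matrices over a finite family. -/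
def tens {ι : Type*} [Fintype ι] {α β : ι → Type*} (M : ∀ i, Matrix (α i) (β i) ℂ) :
    Matrix (∀ i, α i) (∀ i, β i) ℂ :=
  Matrix.of fun u v => ∏ i, M i (u i) (v i)

section tens

variable {ι : Type*} [Fintype ι] [DecidableEq ι] {α β γ : ι → Type*}

lemma tens_apply (M : ∀ i, Matrix (α i) (β i) ℂ) (u v) :
    tens M u v = ∏ i, M i (u i) (v i) := rfl

lemma tens_mul [∀ i, Fintype (β i)] [∀ i, DecidableEq (β i)]
    (M : ∀ i, Matrix (α i) (β i) ℂ) (L : ∀ i, Matrix (β i) (γ i) ℂ) :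
    tens M * tens L = tens (fun i => M i * L i) := by
  ext u v
  simp only [Matrix.mul_apply, tens_apply]
  rw [Fintype.prod_sum (fun i j => M i (u i) j * L i j (v i))]
  exact Finset.sum_congr rfl fun w _ => (Finset.prod_mul_distrib).symm

lemma tens_conjTranspose (M : ∀ i, Matrix (α i) (β i) ℂ) :
    (tens M)ᴴ = tens (fun i => (M i)ᴴ) := by
  ext u v
  simp only [conjTranspose_apply, tens_apply]
  exact map_prod (starRingEnd ℂ) _ _

lemma tens_one [∀ i, DecidableEq (α i)] :
    tens (fun i => (1 : Matrix (α i) (α i) ℂ)) = 1 := by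
  ext u v
  by_cases h : u = v
  · subst h
    simp [tens_apply]
  · obtain ⟨i, hi⟩ := Function.ne_iff.mp h
    rw [tens_apply, Finset.prod_eq_zero (Finset.mem_univ i) (by simp [hi]),
      Matrix.one_apply_ne h]

lemma tens_eq_zero (M : ∀ i, Matrix (α i) (β i) ℂ) (i₀ : ι) (h : M i₀ = 0) :
    tens M = 0 := by
  ext u v
  rw [tens_apply, Finset.prod_eq_zero (Finset.mem_univ i₀) (by simp [h])]
  rfl

end tens

/-! ### Trace and square-root facts -/

section sqrt

variable {n : Type*} [Fintype n] [DecidableEq n]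

open scoped MatrixOrder

/-- Square root of a positive semidefinite matrix. -/
noncomputable def _root_.Matrix.PosSemidef.sqrt {A : Matrix n n ℂ} (_hA : A.PosSemidef) :
    Matrix n n ℂ :=
  CFC.sqrt A

lemma _root_.Matrix.PosSemidef.sqrt_mul_self {A : Matrix n n ℂ} (hA : A.PosSemidef) :
    hA.sqrt * hA.sqrt = A :=
  CFC.sqrt_mul_sqrt_self A hA.nonneg

lemma _root_.Matrix.PosSemidef.posSemidef_sqrt {A : Matrix n n ℂ} (hA : A.PosSemidef) :
    hA.sqrt.PosSemidef :=
  Matrix.nonneg_iff_posSemidef.mp (CFC.sqrt_nonneg A)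

lemma _root_.Matrix.PosSemidef.eq_sqrt_of_sq_eq {B : Matrix n n ℂ} (hB : B.PosSemidef)
    {A : Matrix n n ℂ} (hA : A.PosSemidef) (h : B ^ 2 = A) : B = hA.sqrt :=
  ((CFC.sqrt_eq_iff A B hA.nonneg hB.nonneg).mpr (by rw [← sq, h])).symm

lemma trace_nonneg_of_posSemidef {A : Matrix n n ℂ} (hA : A.PosSemidef) : 0 ≤ A.trace := by
  rw [Matrix.trace]
  refine Finset.sum_nonneg fun i _ => ?_
  have := hA.dotProduct_mulVec_nonneg (Pi.single i 1)
  simpa [dotProduct, Matrix.mulVec_single, Pi.single_apply, Finset.sum_ite_eq,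
    Matrix.diag] using this

lemma trace_mul_re_nonneg {A B : Matrix n n ℂ} (hA : A.PosSemidef) (hB : B.PosSemidef) :
    0 ≤ ((A * B).trace).re := by
  set s := hB.sqrt with hs
  have h1 : A * B = A * s * s := by rw [mul_assoc, hB.sqrt_mul_self]
  have h2 : (A * s * s).trace = (sᴴ * A * s).trace := by
    rw [Matrix.trace_mul_comm, hB.posSemidef_sqrt.1, ← mul_assoc]
  have h3 : (sᴴ * A * s).PosSemidef := hA.conjTranspose_mul_mul_same s
  have := trace_nonneg_of_posSemidef h3
  rw [h1, h2]
  exact (Complex.le_def.mp this).1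

lemma commute_sqrt_one_sub {A : Matrix n n ℂ} (hA : A.PosSemidef)
    (h1 : (1 - A).PosSemidef) : Commute hA.sqrt h1.sqrt := by
  set U : Matrix n n ℂ := hA.1.eigenvectorUnitary.1 with hUdef
  have hUU : Uᴴ * U = 1 := by
    simpa [star_eq_conjTranspose] using (Matrix.mem_unitaryGroup_iff'.mp hA.1.eigenvectorUnitary.2)
  have hUU' : U * Uᴴ = 1 := by
    simpa [star_eq_conjTranspose] using (Matrix.mem_unitaryGroup_iff.mp hA.1.eigenvectorUnitary.2)
  set d : n → ℝ := hA.1.eigenvalues with hddef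
  have hspec : A = U * diagonal (RCLike.ofReal ∘ d) * Uᴴ := by
    simpa [star_eq_conjTranspose] using hA.1.spectral_theorem
  have hOneSub : 1 - A = U * diagonal (fun i => ((1 - d i : ℝ) : ℂ)) * Uᴴ := by
    have : (diagonal (fun i => ((1 - d i : ℝ) : ℂ))) =
        1 - diagonal (RCLike.ofReal ∘ d) := by
      rw [← Matrix.diagonal_one, Matrix.diagonal_sub]
      refine congrArg diagonal (funext fun i => ?_)
      simp [Function.comp, RCLike.ofReal]
    rw [this, Matrix.mul_sub, Matrix.sub_mul, Matrix.mul_one, hUU', ← hspec]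
  have hd_le : ∀ i, 1 - d i ≥ 0 := by
    intro i
    have hconj : Uᴴ * (1 - A) * U = diagonal (fun i => ((1 - d i : ℝ) : ℂ)) := by
      rw [hOneSub]
      calc Uᴴ * (U * diagonal (fun i => ((1 - d i : ℝ) : ℂ)) * Uᴴ) * U
          = (Uᴴ * U) * diagonal (fun i => ((1 - d i : ℝ) : ℂ)) * (Uᴴ * U) := by
            noncomm_ring
        _ = _ := by rw [hUU, one_mul, mul_one]
    have hpsd : (Uᴴ * (1 - A) * U).PosSemidef := h1.conjTranspose_mul_mul_same U
    rw [hconj] at hpsd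
    have := Matrix.posSemidef_diagonal_iff.mp hpsd i
    exact_mod_cast (Complex.le_def.mp this).1
  set S : Matrix n n ℂ := U * diagonal (fun i => ((Real.sqrt (1 - d i) : ℝ) : ℂ)) * Uᴴ with hSdef
  have hSpsd : S.PosSemidef := by
    refine Matrix.PosSemidef.mul_mul_conjTranspose_same ?_ U
    refine Matrix.posSemidef_diagonal_iff.mpr fun i => ?_
    rw [Complex.le_def]
    constructor
    · simpa using Real.sqrt_nonneg (1 - d i)
    · simp
  have hSsq : S ^ 2 = 1 - A := by
    rw [pow_two, hSdef]
    calc (U * diagonal _ * Uᴴ) * (U * diagonal _ * Uᴴ)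
        = U * (diagonal (fun i => ((Real.sqrt (1 - d i) : ℝ) : ℂ)) * (Uᴴ * U) *
            diagonal (fun i => ((Real.sqrt (1 - d i) : ℝ) : ℂ))) * Uᴴ := by noncomm_ring
      _ = U * diagonal (fun i => ((1 - d i : ℝ) : ℂ)) * Uᴴ := by
          rw [hUU, mul_one, Matrix.diagonal_mul_diagonal]
          refine congrArg (fun D => U * D * Uᴴ) (congrArg diagonal (funext fun i => ?_))
          rw [← Complex.ofReal_mul, Real.mul_self_sqrt (hd_le i)]
      _ = 1 - A := hOneSub.symm
  have hSeq : S = h1.sqrt := hSpsd.eq_sqrt_of_sq_eq h1 hSsq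
  have hAsqrt : hA.sqrt = U * diagonal (fun i => ((Real.sqrt (d i) : ℝ) : ℂ)) * Uᴴ := by
    rw [Matrix.PosSemidef.sqrt, CFC.sqrt_eq_cfc, cfc_nnreal_eq_real _ A hA.nonneg, hA.1.cfc_eq]
    simp only [IsHermitian.cfc, Unitary.conjStarAlgAut_apply, star_eq_conjTranspose]
    refine congrArg (fun D => U * D * Uᴴ) (congrArg diagonal (funext fun i => ?_))
    simp [Function.comp, Real.coe_sqrt, Real.coe_toNNReal', max_eq_left (hA.eigenvalues_nonneg i),
      hddef]
  rw [Commute, SemiconjBy, hAsqrt, ← hSeq, hSdef]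
  calc (U * diagonal _ * Uᴴ) * (U * diagonal _ * Uᴴ)
      = U * (diagonal (fun i => ((Real.sqrt (d i) : ℝ) : ℂ)) * (Uᴴ * U) *
          diagonal (fun i => ((Real.sqrt (1 - d i) : ℝ) : ℂ))) * Uᴴ := by noncomm_ring
    _ = U * (diagonal (fun i => ((Real.sqrt (1 - d i) : ℝ) : ℂ)) * (Uᴴ * U) *
          diagonal (fun i => ((Real.sqrt (d i) : ℝ) : ℂ))) * Uᴴ := by
        rw [hUU, mul_one, mul_one, Matrix.diagonal_mul_diagonal, Matrix.diagonal_mul_diagonal]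
        refine congrArg (fun D => U * D * Uᴴ) (congrArg diagonal (funext fun i => ?_))
        ring
    _ = (U * diagonal _ * Uᴴ) * (U * diagonal _ * Uᴴ) := by noncomm_ring

end sqrt

/-! ### Naimark dilation of a two-outcome POVM -/

section dil

variable {m m' : Type*} [Fintype m] [DecidableEq m] [Fintype m'] [DecidableEq m']

lemma posSemidef_fromBlocks_diag {A : Matrix m m ℂ} {D : Matrix m' m' ℂ}
    (hA : A.PosSemidef) (hD : D.PosSemidef) : (fromBlocks A 0 0 D).PosSemidef := by
  refine Matrix.PosSemidef.of_dotProduct_mulVec_nonneg ?_ ?_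
  · rw [Matrix.IsHermitian, fromBlocks_conjTranspose, conjTranspose_zero, conjTranspose_zero,
      hA.1.eq, hD.1.eq]
  · intro x
    have key : star x ⬝ᵥ (fromBlocks A 0 0 D *ᵥ x) =
        star (x ∘ Sum.inl) ⬝ᵥ (A *ᵥ (x ∘ Sum.inl)) +
        star (x ∘ Sum.inr) ⬝ᵥ (D *ᵥ (x ∘ Sum.inr)) := by
      simp [dotProduct, Fintype.sum_sum_type, Matrix.fromBlocks_mulVec, Function.comp]
    rw [key]
    exact add_nonneg (hA.dotProduct_mulVec_nonneg _) (hD.dotProduct_mulVec_nonneg _)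

/-- Naimark dilation projector of a POVM effect. -/
noncomputable def dilP {A : Matrix m m ℂ} (hA : A.PosSemidef) (h1 : (1 - A).PosSemidef) :
    Matrix (m ⊕ m) (m ⊕ m) ℂ :=
  fromBlocks A (hA.sqrt * h1.sqrt) (hA.sqrt * h1.sqrt) (1 - A)

lemma dilP_isHermitian {A : Matrix m m ℂ} (hA : A.PosSemidef) (h1 : (1 - A).PosSemidef) :
    (dilP hA h1).IsHermitian := by
  have hab := commute_sqrt_one_sub hA h1
  have hB : (hA.sqrt * h1.sqrt)ᴴ = hA.sqrt * h1.sqrt := by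
    rw [conjTranspose_mul, hA.posSemidef_sqrt.1.eq, h1.posSemidef_sqrt.1.eq]
    exact hab.symm.eq
  rw [Matrix.IsHermitian, dilP, fromBlocks_conjTranspose, hA.1.eq, h1.1.eq, hB]

lemma dilP_idem {A : Matrix m m ℂ} (hA : A.PosSemidef) (h1 : (1 - A).PosSemidef) :
    dilP hA h1 * dilP hA h1 = dilP hA h1 := by
  set a := hA.sqrt with hadef
  set b := h1.sqrt with hbdef
  have hab : a * b = b * a := commute_sqrt_one_sub hA h1
  have ha2 : a * a = A := hA.sqrt_mul_self
  have hb2 : b * b = 1 - A := h1.sqrt_mul_self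
  have hBB : (a * b) * (a * b) = A * (1 - A) := by
    rw [mul_assoc, ← mul_assoc b a b, ← hab, mul_assoc a b, ← mul_assoc, ← mul_assoc, ha2,
      mul_assoc, hb2]
  have hca : Commute a (a * b) := (Commute.refl a).mul_right hab
  have hAc : Commute A (a * b) := by rw [← ha2]; exact hca.mul_left hca
  have h1c : Commute (1 - A) (a * b) := (Commute.one_left _).sub_left hAc
  have e1 : A * A + (a * b) * (a * b) = A := by rw [hBB]; noncomm_ring
  have e2 : A * (a * b) + (a * b) * (1 - A) = a * b := by rw [hAc.eq]; noncomm_ring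
  have e3 : (a * b) * A + (1 - A) * (a * b) = a * b := by rw [h1c.eq]; noncomm_ring
  have e4 : (a * b) * (a * b) + (1 - A) * (1 - A) = 1 - A := by rw [hBB]; noncomm_ring
  rw [dilP, fromBlocks_multiply, e1, e2, e3, e4]

end dil

/-! ### Isometric embeddings as matrices -/

section emb

variable {κ μ : Type*} [Fintype κ] [DecidableEq κ] [Fintype μ] [DecidableEq μ]

def embMat (e : μ → κ) : Matrix κ μ ℂ := Matrix.of fun k v => if k = e v then 1 else 0

lemma embMat_conj (e : μ → κ) (X : Matrix κ κ ℂ) :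
    (embMat e)ᴴ * X * embMat e = X.submatrix e e := by
  ext u v
  simp only [Matrix.mul_apply, conjTranspose_apply, embMat, Matrix.of_apply,
    Matrix.submatrix_apply]
  simp only [mul_ite, mul_one, mul_zero, Finset.sum_ite_eq' Finset.univ (e v)]
  simp [apply_ite (starRingEnd ℂ), ite_mul, Finset.sum_ite_eq' Finset.univ (e u)]

lemma embMat_mul_self (e : μ → κ) (he : Function.Injective e) :
    (embMat e)ᴴ * embMat e = 1 := by
  ext u v
  simp only [Matrix.mul_apply, conjTranspose_apply, embMat, Matrix.of_apply,
    Matrix.one_apply]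
  simp only [mul_ite, mul_one, mul_zero]
  rw [Finset.sum_ite_eq' Finset.univ (e v) (fun x => star (if x = e u then (1:ℂ) else 0))]
  simp only [Finset.mem_univ, if_true, apply_ite (star : ℂ → ℂ), star_one, star_zero]
  simp [he.eq_iff, eq_comm]

end emb

/-! ### Cyclic combinatorics on `Fin N → Bool` -/

section cyc

variable {N : ℕ} [NeZero N]

open Fin.NatCast in
lemma propagate {P : Fin N → Prop} (j : Fin N) (h0 : P j)
    (hstep : ∀ i, P i → P (i + 1)) : ∀ i, P i := by
  have key : ∀ k : ℕ, P (j + (k : Fin N)) := by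
    intro k
    induction k with
    | zero => simpa using h0
    | succ k ih =>
      have := hstep _ ih
      have e : ((k + 1 : ℕ) : Fin N) = (k : Fin N) + 1 := by push_cast; ring
      simpa [Nat.succ_eq_add_one, e, add_assoc] using this
  intro i
  have := key (i - j).val
  rwa [Fin.cast_val_eq_self, add_comm, sub_add_cancel] at this

lemma agree_or_disagree (x y : Fin N → Bool)
    (h : ∀ i, x i = y i → x (i + 1) = y (i + 1)) :
    x = y ∨ ∀ i, x i ≠ y i := by
  by_cases hc : ∀ i, x i ≠ y i
  · exact Or.inr hc
  · push_neg at hc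
    obtain ⟨j, hj⟩ := hc
    exact Or.inl (funext (propagate j hj h))

lemma exists_orth {x y : Fin N → Bool} (hxy : x ≠ y) (hco : y ≠ fun i => !x i) :
    ∃ i, x i = y i ∧ x (i + 1) ≠ y (i + 1) := by
  by_contra hcon
  push_neg at hcon
  rcases agree_or_disagree x y hcon with h1 | h2
  · exact hxy h1
  · refine hco (funext fun i => ?_)
    have := h2 i
    revert this
    cases x i <;> cases y i <;> simp

end cyc

/-! ### Per-party projective dilation -/

section party

variable {m : Type*} [Fintype m] [DecidableEq m]

lemma one_sub_povm {Mf Mt : Matrix m m ℂ} (h : Mf + Mt = 1) : 1 - Mf = Mt := by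
  rw [← h, add_sub_cancel_left]

lemma one_sub_fromBlocks (X : Matrix m m ℂ) :
    (1 : Matrix (m ⊕ m) (m ⊕ m) ℂ) - fromBlocks X 0 0 0 = fromBlocks (1 - X) 0 0 1 := by
  rw [← fromBlocks_one, sub_eq_add_neg, fromBlocks_neg, fromBlocks_add]
  congr 1 <;> simp [sub_eq_add_neg]

variable (M : Bool → Bool → Matrix m m ℂ) (hM : ∀ b a, (M b a).PosSemidef)
  (hpov : ∀ b, M b false + M b true = 1)

/-- The basic (outcome `false`) projector of player's dilated measurement for input `b`. -/
noncomputable def partyBase (b : Bool) :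
    Matrix ((m ⊕ m) ⊕ (m ⊕ m)) ((m ⊕ m) ⊕ (m ⊕ m)) ℂ :=
  if b then
    dilP (posSemidef_fromBlocks_diag (hM true false) .zero)
      (by rw [one_sub_fromBlocks]
          exact posSemidef_fromBlocks_diag
            (by rw [one_sub_povm (hpov true)]; exact hM true true) .one)
  else
    fromBlocks (dilP (hM false false)
      (by rw [one_sub_povm (hpov false)]; exact hM false true)) 0 0 0

/-- The dilated projective measurements of a player. -/
noncomputable def partyProj (b a : Bool) :
    Matrix ((m ⊕ m) ⊕ (m ⊕ m)) ((m ⊕ m) ⊕ (m ⊕ m)) ℂ :=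
  if a then 1 - partyBase M hM hpov b else partyBase M hM hpov b

lemma partyBase_idem (b : Bool) :
    partyBase M hM hpov b * partyBase M hM hpov b = partyBase M hM hpov b := by
  cases b
  · simp only [partyBase, if_neg Bool.false_ne_true, Bool.false_eq_true, if_false]
    rw [fromBlocks_multiply]
    simp [dilP_idem]
  · simp only [partyBase, if_pos rfl]
    exact dilP_idem _ _

lemma partyBase_isHermitian (b : Bool) : (partyBase M hM hpov b).IsHermitian := by
  cases b
  · simp only [partyBase, Bool.false_eq_true, if_false]
    rw [Matrix.IsHermitian, fromBlocks_conjTranspose]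
    simp [(dilP_isHermitian _ _).eq]
  · simp only [partyBase, if_pos rfl]
    exact dilP_isHermitian _ _

lemma partyProj_idem (b a : Bool) :
    partyProj M hM hpov b a * partyProj M hM hpov b a = partyProj M hM hpov b a := by
  have h := partyBase_idem M hM hpov b
  have e1 : partyProj M hM hpov b true = 1 - partyBase M hM hpov b := by simp [partyProj]
  cases a
  · simpa [partyProj] using h
  · rw [e1, sub_mul, one_mul, mul_sub, mul_one, h]
    abel

lemma partyProj_isHermitian (b a : Bool) : (partyProj M hM hpov b a).IsHermitian := by
  have h := partyBase_isHermitian M hM hpov b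
  have e1 : partyProj M hM hpov b true = 1 - partyBase M hM hpov b := by simp [partyProj]
  cases a
  · simpa [partyProj] using h
  · rw [e1]
    exact (Matrix.isHermitian_one).sub h

lemma partyProj_orth (b : Bool) {a a' : Bool} (h : a ≠ a') :
    partyProj M hM hpov b a * partyProj M hM hpov b a' = 0 := by
  have hi := partyBase_idem M hM hpov b
  have e0 : partyProj M hM hpov b false = partyBase M hM hpov b := by simp [partyProj]
  have e1 : partyProj M hM hpov b true = 1 - partyBase M hM hpov b := by simp [partyProj]
  cases a <;> cases a'
  · exact absurd rfl h
  · rw [e0, e1, mul_sub, mul_one, hi, sub_self]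
  · rw [e1, e0, sub_mul, one_mul, hi, sub_self]
  · exact absurd rfl h

lemma partyProj_corner (b a : Bool) :
    (partyProj M hM hpov b a).submatrix (Sum.inl ∘ Sum.inl) (Sum.inl ∘ Sum.inl) = M b a := by
  have hone : ((1 : Matrix ((m ⊕ m) ⊕ (m ⊕ m)) ((m ⊕ m) ⊕ (m ⊕ m)) ℂ)).submatrix
      (Sum.inl ∘ Sum.inl : m → (m ⊕ m) ⊕ (m ⊕ m)) (Sum.inl ∘ Sum.inl) = 1 := by
    ext u v
    simp [Matrix.one_apply, Function.comp, Sum.inl.injEq]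
  have hbase : ∀ b, (partyBase M hM hpov b).submatrix
      (Sum.inl ∘ Sum.inl : m → (m ⊕ m) ⊕ (m ⊕ m)) (Sum.inl ∘ Sum.inl) = M b false := by
    intro b
    cases b
    · rfl
    · rfl
  have e1 : partyProj M hM hpov b true = 1 - partyBase M hM hpov b := by simp [partyProj]
  cases a
  · simpa [partyProj] using hbase b
  · have : ((1 : Matrix ((m ⊕ m) ⊕ (m ⊕ m)) ((m ⊕ m) ⊕ (m ⊕ m)) ℂ) -
        partyBase M hM hpov b).submatrix (Sum.inl ∘ Sum.inl : m → (m ⊕ m) ⊕ (m ⊕ m))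
        (Sum.inl ∘ Sum.inl) = 1 - M b false := by
      have : ∀ (X Y : Matrix ((m ⊕ m) ⊕ (m ⊕ m)) ((m ⊕ m) ⊕ (m ⊕ m)) ℂ),
          (X - Y).submatrix (Sum.inl ∘ Sum.inl : m → (m ⊕ m) ⊕ (m ⊕ m)) (Sum.inl ∘ Sum.inl)
          = X.submatrix (Sum.inl ∘ Sum.inl) (Sum.inl ∘ Sum.inl) -
            Y.submatrix (Sum.inl ∘ Sum.inl) (Sum.inl ∘ Sum.inl) := by
        intro X Y; ext u v; simp [Matrix.sub_apply]
      rw [this, hone, hbase b]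
    rw [e1, this, one_sub_povm (hpov b)]

end party


/-! ### The global dilated strategy and the upper bound -/

section main

variable {N : ℕ} [NeZero N] (d : Fin N → ℕ)
  (M : (i : Fin N) → Bool → Bool → Matrix (Fin (d i)) (Fin (d i)) ℂ)
  (hM : ∀ i b a, (M i b a).PosSemidef)
  (hpov : ∀ i b, M i b false + M i b true = 1)

/-- The dilated measurement projectors of all parties. -/
noncomputable def Rp (i : Fin N) (b a : Bool) :
    Matrix ((Fin (d i) ⊕ Fin (d i)) ⊕ (Fin (d i) ⊕ Fin (d i)))
      ((Fin (d i) ⊕ Fin (d i)) ⊕ (Fin (d i) ⊕ Fin (d i))) ℂ :=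
  partyProj (M i) (hM i) (hpov i) b a

/-- The global isometry. -/
def Wmat : Matrix (∀ i, (Fin (d i) ⊕ Fin (d i)) ⊕ (Fin (d i) ⊕ Fin (d i)))
    (∀ i, Fin (d i)) ℂ :=
  tens (fun i => embMat (Sum.inl ∘ Sum.inl))

/-- The global dilated game operators. -/
noncomputable def Ep (x : Fin N → Bool) :
    Matrix (∀ i, (Fin (d i) ⊕ Fin (d i)) ⊕ (Fin (d i) ⊕ Fin (d i)))
      (∀ i, (Fin (d i) ⊕ Fin (d i)) ⊕ (Fin (d i) ⊕ Fin (d i))) ℂ :=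
  tens (fun i => Rp d M hM hpov i (x i) (x (i + 1)))

lemma Wmat_conj_mul : (Wmat d)ᴴ * Wmat d = 1 := by
  rw [Wmat, tens_conjTranspose, tens_mul]
  rw [show (fun i => (embMat (Sum.inl ∘ Sum.inl : Fin (d i) → _))ᴴ *
      embMat (Sum.inl ∘ Sum.inl)) = fun i => (1 : Matrix (Fin (d i)) (Fin (d i)) ℂ) from
    funext fun i => embMat_mul_self _ (Sum.inl_injective.comp Sum.inl_injective)]
  exact tens_one

lemma Ep_transfer (x : Fin N → Bool) :
    (Wmat d)ᴴ * Ep d M hM hpov x * Wmat d = tensProd (fun i => M i (x i) (x (i + 1))) := by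
  rw [Wmat, Ep, tens_conjTranspose, tens_mul, tens_mul]
  refine congrArg tens (funext fun i => ?_)
  rw [embMat_conj, Rp, partyProj_corner]

lemma Ep_idem (x : Fin N → Bool) :
    Ep d M hM hpov x * Ep d M hM hpov x = Ep d M hM hpov x := by
  rw [Ep, tens_mul]
  exact congrArg tens (funext fun i => partyProj_idem _ _ _ _ _)

lemma Ep_herm (x : Fin N → Bool) : (Ep d M hM hpov x)ᴴ = Ep d M hM hpov x := by
  rw [Ep, tens_conjTranspose]
  exact congrArg tens (funext fun i => (partyProj_isHermitian _ _ _ _ _).eq)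

lemma Ep_psd (x : Fin N → Bool) : (Ep d M hM hpov x).PosSemidef := by
  have h : Ep d M hM hpov x = (Ep d M hM hpov x)ᴴ * Ep d M hM hpov x := by
    rw [Ep_herm, Ep_idem]
  rw [h]
  exact Matrix.posSemidef_conjTranspose_mul_self _

lemma Ep_orth {x y : Fin N → Bool} (hxy : x ≠ y) (hco : y ≠ fun i => !x i) :
    Ep d M hM hpov x * Ep d M hM hpov y = 0 := by
  obtain ⟨i₀, ha, hd⟩ := exists_orth hxy hco
  rw [Ep, Ep, tens_mul]
  refine tens_eq_zero _ i₀ ?_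
  rw [← ha]
  exact partyProj_orth _ _ _ _ hd

include hM hpov in
lemma upper_bound (q : (Fin N → Bool) → ℝ) (hq : ∀ x, 0 ≤ q x)
    (ρ : Matrix ((i : Fin N) → Fin (d i)) ((i : Fin N) → Fin (d i)) ℂ)
    (hρ : ρ.PosSemidef) (hρtr : ρ.trace = 1) :
    ∑ x : Fin N → Bool, q x *
        ((ρ * tensProd (fun i => M i (x i) (x (i + 1)))).trace).re ≤
      Finset.univ.sup' Finset.univ_nonempty
        (fun x : Fin N → Bool => q x + q (fun i => !x i)) := by
  classical
  set W := Wmat d with hW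
  set ρ' := W * ρ * Wᴴ with hρ'def
  have hρ' : ρ'.PosSemidef := hρ.mul_mul_conjTranspose_same W
  have hρ'tr : ρ'.trace = 1 := by
    rw [hρ'def, hW, Matrix.trace_mul_comm (Wmat d * ρ) (Wmat d)ᴴ, ← Matrix.mul_assoc,
      Wmat_conj_mul, Matrix.one_mul, hρtr]
  set tp : (Fin N → Bool) → ℝ := fun x => ((ρ' * Ep d M hM hpov x).trace).re with htp
  have htr : ∀ x : Fin N → Bool,
      ((ρ * tensProd (fun i => M i (x i) (x (i + 1)))).trace).re = tp x := by
    intro x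
    rw [htp]
    dsimp only
    rw [← Ep_transfer d M hM hpov x, hρ'def, hW]
    congr 1
    have e1 : (ρ * ((Wmat d)ᴴ * Ep d M hM hpov x * Wmat d)).trace =
        ((ρ * (Wmat d)ᴴ * Ep d M hM hpov x) * Wmat d).trace := by
      simp only [Matrix.mul_assoc]
    rw [e1, Matrix.trace_mul_comm]
    congr 1
    simp only [Matrix.mul_assoc]
  have htnn : ∀ x, 0 ≤ tp x := fun x => trace_mul_re_nonneg hρ' (Ep_psd d M hM hpov x)
  -- the sum of winning probabilities over a complement-free family is at most 1
  have hSbound : ∀ S : Finset (Fin N → Bool),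
      (∀ x ∈ S, ∀ y ∈ S, x ≠ y → y ≠ fun i => !x i) → ∑ x ∈ S, tp x ≤ 1 := by
    intro S hfree
    set F := ∑ x ∈ S, Ep d M hM hpov x with hF
    have hFidem : F * F = F := by
      rw [hF, Finset.sum_mul_sum]
      refine Finset.sum_congr rfl fun x hx => ?_
      rw [Finset.sum_eq_single_of_mem x hx fun y hy hyx =>
        Ep_orth d M hM hpov (Ne.symm hyx) (hfree x hx y hy (Ne.symm hyx)), Ep_idem]
    have hFherm : Fᴴ = F := by
      rw [hF, Matrix.conjTranspose_sum]
      exact Finset.sum_congr rfl fun x _ => Ep_herm d M hM hpov x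
    have h1F : ((1 : Matrix _ _ ℂ) - F).PosSemidef := by
      have hh : ((1 : Matrix _ _ ℂ) - F)ᴴ = 1 - F := by
        rw [Matrix.conjTranspose_sub, Matrix.conjTranspose_one, hFherm]
      have hidem : ((1 : Matrix _ _ ℂ) - F) * (1 - F) = 1 - F := by
        rw [sub_mul, one_mul, mul_sub, mul_one, hFidem]
        abel
      have heq : (1 : Matrix _ _ ℂ) - F = (1 - F)ᴴ * (1 - F) := by rw [hh, hidem]
      rw [heq]
      exact Matrix.posSemidef_conjTranspose_mul_self _
    have hsum : ∑ x ∈ S, tp x = ((ρ' * F).trace).re := by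
      rw [hF, Finset.mul_sum, Matrix.trace_sum, Complex.re_sum]
    have hpos := trace_mul_re_nonneg hρ' h1F
    have hexp : ((ρ' * ((1 : Matrix _ _ ℂ) - F)).trace).re =
        (ρ'.trace).re - ((ρ' * F).trace).re := by
      rw [mul_sub, mul_one, Matrix.trace_sub, Complex.sub_re]
    rw [hexp, hρ'tr, Complex.one_re] at hpos
    rw [hsum]
    linarith
  -- split the sum into complementary pairs
  set csup := Finset.univ.sup' Finset.univ_nonempty
    (fun x : Fin N → Bool => q x + q (fun i => !x i)) with hcsup
  have hcsup0 : 0 ≤ csup := by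
    have hle := Finset.le_sup' (fun x : Fin N → Bool => q x + q (fun i => !x i))
      (Finset.mem_univ (fun _ => false))
    have h0 := add_nonneg (hq (fun _ => false)) (hq (fun i => !(fun _ : Fin N => false) i))
    exact le_trans h0 hle
  set U : Finset (Fin N → Bool) := Finset.univ.filter (fun x => x 0 = false) with hU
  have hmemU : ∀ x : Fin N → Bool, x ∈ U ↔ x 0 = false := by
    intro x
    simp [hU]
  have hsplit : ∑ x : Fin N → Bool, q x * tp x =
      ∑ x ∈ U, (q x * tp x + q (fun i => !x i) * tp (fun i => !x i)) := by
    rw [Finset.sum_add_distrib]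
    rw [← Finset.sum_filter_add_sum_filter_not Finset.univ (fun x : Fin N → Bool => x 0 = false)
      (fun x => q x * tp x)]
    congr 1
    refine Finset.sum_nbij' (fun x : Fin N → Bool => fun i => !x i)
      (fun x : Fin N → Bool => fun i => !x i) ?_ ?_ ?_ ?_ ?_
    · intro a ha
      simp only [Finset.mem_filter, Finset.mem_univ, true_and, hU] at ha ⊢
      simp [ha]
    · intro a ha
      simp only [Finset.mem_filter, Finset.mem_univ, true_and, hU] at ha ⊢
      simp [ha]
    · intro a _
      funext i
      simp
    · intro a _
      funext i
      simp
    · intro a _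
      have : (fun i => !(!(a i))) = a := by funext i; simp
      simp only [this]
  set sel : (Fin N → Bool) → (Fin N → Bool) :=
    fun x => if tp (fun i => !x i) ≤ tp x then x else (fun i => !x i) with hsel
  have hselpair : ∀ x, sel x = x ∨ sel x = fun i => !x i := by
    intro x
    by_cases h : tp (fun i => !x i) ≤ tp x
    · left; simp only [hsel]; rw [if_pos h]
    · right; simp only [hsel]; rw [if_neg h]
  have hselmax : ∀ x, tp x ≤ tp (sel x) ∧ tp (fun i => !x i) ≤ tp (sel x) := by
    intro x
    by_cases h : tp (fun i => !x i) ≤ tp x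
    · simp only [hsel]; rw [if_pos h]; exact ⟨le_rfl, h⟩
    · simp only [hsel]; rw [if_neg h]; exact ⟨le_of_not_ge h, le_rfl⟩
  have hpair : ∀ x ∈ U, q x * tp x + q (fun i => !x i) * tp (fun i => !x i) ≤
      csup * tp (sel x) := by
    intro x _
    obtain ⟨h1, h2⟩ := hselmax x
    calc q x * tp x + q (fun i => !x i) * tp (fun i => !x i)
        ≤ q x * tp (sel x) + q (fun i => !x i) * tp (sel x) :=
          add_le_add (mul_le_mul_of_nonneg_left h1 (hq x))
            (mul_le_mul_of_nonneg_left h2 (hq _))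
      _ = (q x + q (fun i => !x i)) * tp (sel x) := (add_mul _ _ _).symm
      _ ≤ csup * tp (sel x) := by
          refine mul_le_mul_of_nonneg_right ?_ (htnn _)
          rw [hcsup]
          exact Finset.le_sup' (fun x : Fin N → Bool => q x + q (fun i => !x i))
            (Finset.mem_univ x)
  have hinj : ∀ x ∈ U, ∀ x' ∈ U, sel x = sel x' → x = x' := by
    intro x hx x' hx' he
    have hx0 := (hmemU x).mp hx
    have hx'0 := (hmemU x').mp hx'
    rcases hselpair x with e | e <;> rcases hselpair x' with e' | e' <;> rw [e, e'] at he
    · exact he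
    · exfalso
      have h0 := congrFun he 0
      rw [hx0, hx'0] at h0
      simp at h0
    · exfalso
      have h0 := congrFun he 0
      rw [hx0, hx'0] at h0
      simp at h0
    · funext i
      have hi := congrFun he i
      simpa using hi
  have hfree_img : ∀ y ∈ U.image sel, ∀ y' ∈ U.image sel, y ≠ y' → y' ≠ fun i => !y i := by
    intro y hy y' hy' hne hcontra
    obtain ⟨x, hx, hyx⟩ := Finset.mem_image.mp hy
    obtain ⟨x', hx', hyx'⟩ := Finset.mem_image.mp hy'
    have hx0 := (hmemU x).mp hx
    have hx'0 := (hmemU x').mp hx'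
    rcases hselpair x with e | e <;> rcases hselpair x' with e' | e'
    · -- y = x, y' = x'
      rw [e] at hyx
      rw [e'] at hyx'
      have : x' 0 = !(y 0) := by rw [hyx', hcontra]
      rw [← hyx, hx0, hx'0] at this
      simp at this
    · -- y = x, y' = fun i => !x' i, so x' = fun i => !y' i = y = x
      rw [e] at hyx
      rw [e'] at hyx'
      have hx'y : x' = x := by
        funext i
        have h1i := congrFun hyx' i
        have h2i := congrFun hcontra i
        have h3i := congrFun hyx i
        rw [h2i] at h1i
        have h4i := congr_arg Bool.not h1i
        simpa [h3i] using h4i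
      rw [hx'y, e] at e'
      have h0 := congrFun e' 0
      simp at h0
    · -- y = fun i => !x i, y' = x'
      rw [e] at hyx
      rw [e'] at hyx'
      have hx'x : x' = x := by
        funext i
        have h1i := congrFun hyx' i
        have h2i := congrFun hcontra i
        have h3i := congrFun hyx i
        rw [h2i, ← h3i] at h1i
        simpa using h1i
      rw [hx'x, e] at e'
      have h0 := congrFun e' 0
      simp at h0
    · -- y = fun i => !x i, y' = fun i => !x' i
      rw [e] at hyx
      rw [e'] at hyx'
      have h2 := congrFun hcontra 0
      rw [← hyx', ← hyx] at h2
      have h2' : x' 0 = !x 0 := by simpa using h2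
      rw [hx0, hx'0] at h2'
      simp at h2'
  have himg : ∑ x ∈ U, tp (sel x) ≤ 1 := by
    have := Finset.sum_image (g := sel) (f := tp) (fun x hx y hy h => hinj x hx y hy h)
    rw [← this]
    exact hSbound (U.image sel) hfree_img
  calc ∑ x : Fin N → Bool, q x *
        ((ρ * tensProd (fun i => M i (x i) (x (i + 1)))).trace).re
      = ∑ x : Fin N → Bool, q x * tp x := Finset.sum_congr rfl fun x _ => by rw [htr x]
    _ = ∑ x ∈ U, (q x * tp x + q (fun i => !x i) * tp (fun i => !x i)) := hsplit
    _ ≤ ∑ x ∈ U, csup * tp (sel x) := Finset.sum_le_sum hpair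
    _ = csup * ∑ x ∈ U, tp (sel x) := (Finset.mul_sum _ _ _).symm
    _ ≤ csup * 1 := mul_le_mul_of_nonneg_left himg hcsup0
    _ = csup := mul_one _

end main

end GYNI

/-- The maximal quantum winning probability of the GYNI game (over all shared
states `ρ` and local two-outcome POVMs `M i b a` on Hilbert spaces of arbitrary
finite dimensions) equals the maximal classical winning probability
`max_x (q x + q x̄)`, for any input distribution `q`. -/
theorem gyni_quantum_eq_classical (N : ℕ) [NeZero N]
    (q : (Fin N → Bool) → ℝ) (hq : ∀ x, 0 ≤ q x) :
    IsGreatest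
      {w : ℝ | ∃ (d : Fin N → ℕ)
        (ρ : Matrix ((i : Fin N) → Fin (d i)) ((i : Fin N) → Fin (d i)) ℂ)
        (M : (i : Fin N) → Bool → Bool → Matrix (Fin (d i)) (Fin (d i)) ℂ),
        ρ.PosSemidef ∧ ρ.trace = 1 ∧
        (∀ i b a, (M i b a).PosSemidef) ∧
        (∀ i b, M i b false + M i b true = 1) ∧
        w = ∑ x : Fin N → Bool, q x *
          ((ρ * tensProd (fun i => M i (x i) (x (i + 1)))).trace).re}
      (Finset.univ.sup' Finset.univ_nonempty
        (fun x : Fin N → Bool => q x + q (fun i => !x i))) := by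
  classical
  constructor
  · -- a classical deterministic strategy achieves the bound
    obtain ⟨x₀, -, hx₀⟩ := Finset.exists_mem_eq_sup' Finset.univ_nonempty
      (fun x : Fin N → Bool => q x + q (fun i => !x i))
    refine ⟨fun _ => 1, 1,
      fun i b a => if ((b != x₀ i) != x₀ (i + 1)) = a then 1 else 0,
      Matrix.PosSemidef.one, ?_, ?_, ?_, ?_⟩
    · simp [Matrix.trace_one, Fintype.card_pi]
    · intro i b a
      dsimp only
      split
      · exact Matrix.PosSemidef.one
      · exact Matrix.PosSemidef.zero
    · intro i b
      dsimp only
      cases h : ((b != x₀ i) != x₀ (i + 1)) <;> simp [h]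
    · rw [hx₀]
      have hne : x₀ ≠ (fun i => !x₀ i) := by
        intro h
        have := congrFun h 0
        simp at this
      have hbool1 : ∀ a b : Bool, ((a != a) != b) = b := by decide
      have hbool2 : ∀ a b : Bool, (((!a) != a) != b) = !b := by decide
      have hbool3 : ∀ a b c : Bool, (((a != c) != a) != b) = (b != c) := by decide
      have hwin : ∀ x : Fin N → Bool,
          (∀ i, ((x i != x₀ i) != x₀ (i + 1)) = x (i + 1)) ↔
            (x = x₀ ∨ x = fun i => !x₀ i) := by
        intro x
        constructor
        · intro hall
          have hprop : ∀ i, x i = (x₀ i != (x 0 != x₀ 0)) := by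
            refine GYNI.propagate 0 ?_ ?_
            · cases h0 : x 0 <;> cases h1 : x₀ 0 <;> simp [h0, h1]
            · intro i hi
              rw [← hall i, hi, hbool3]
          cases hc : (x 0 != x₀ 0)
          · left
            funext i
            have hpi := hprop i
            rw [hc] at hpi
            simpa using hpi
          · right
            funext i
            have hpi := hprop i
            rw [hc] at hpi
            simpa using hpi
        · rintro (rfl | rfl)
          · intro i; exact hbool1 _ _
          · intro i; exact hbool2 _ _
      have htr1 : ∀ x : Fin N → Bool,
          (((1 : Matrix (∀ i : Fin N, Fin 1) (∀ i : Fin N, Fin 1) ℂ) *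
            tensProd (fun i => if ((x i != x₀ i) != x₀ (i + 1)) = x (i + 1)
              then (1 : Matrix (Fin 1) (Fin 1) ℂ) else 0)).trace)
          = if (∀ i, ((x i != x₀ i) != x₀ (i + 1)) = x (i + 1)) then 1 else 0 := by
        intro x
        rw [one_mul, Matrix.trace, Fintype.sum_unique]
        simp only [Matrix.diag_apply, tensProd, Matrix.of_apply]
        have hfac : ∀ i : Fin N,
            (if ((x i != x₀ i) != x₀ (i + 1)) = x (i + 1)
              then (1 : Matrix (Fin 1) (Fin 1) ℂ) else 0)
              ((default : ∀ i : Fin N, Fin 1) i) ((default : ∀ i : Fin N, Fin 1) i)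
            = if ((x i != x₀ i) != x₀ (i + 1)) = x (i + 1) then (1 : ℂ) else 0 := by
          intro i
          rw [apply_ite (fun X : Matrix (Fin 1) (Fin 1) ℂ =>
            X ((default : ∀ i : Fin N, Fin 1) i) ((default : ∀ i : Fin N, Fin 1) i))]
          rw [Matrix.one_apply_eq, Matrix.zero_apply]
        rw [Finset.prod_congr rfl fun i _ => hfac i]
        by_cases hall : ∀ i, ((x i != x₀ i) != x₀ (i + 1)) = x (i + 1)
        · rw [if_pos hall]
          exact Finset.prod_eq_one fun i _ => by rw [if_pos (hall i)]
        · rw [if_neg hall]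
          push_neg at hall
          obtain ⟨i₀, hi₀⟩ := hall
          exact Finset.prod_eq_zero (Finset.mem_univ i₀) (by rw [if_neg hi₀])
      refine Eq.symm ?_
      calc ∑ x : Fin N → Bool, q x *
            (((1 : Matrix (∀ i : Fin N, Fin 1) (∀ i : Fin N, Fin 1) ℂ) *
              tensProd (fun i => if ((x i != x₀ i) != x₀ (i + 1)) = x (i + 1)
                then (1 : Matrix (Fin 1) (Fin 1) ℂ) else 0)).trace).re
          = ∑ x : Fin N → Bool, ((if x = x₀ then q x else 0) +
              (if x = (fun i => !x₀ i) then q x else 0)) := by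
            refine Finset.sum_congr rfl fun x _ => ?_
            rw [htr1 x, if_congr (hwin x) rfl rfl]
            by_cases h1 : x = x₀ <;> by_cases h2 : x = (fun i => !x₀ i)
            · exact absurd (h1 ▸ h2) hne
            · simp [h1, h2, hne, Ne.symm hne]
            · simp [h1, h2, hne, Ne.symm hne]
            · simp [h1, h2]
        _ = q x₀ + q (fun i => !x₀ i) := by
            rw [Finset.sum_add_distrib, Finset.sum_ite_eq' Finset.univ x₀ q,
              Finset.sum_ite_eq' Finset.univ (fun i => !x₀ i) q]
            simp
  · rintro w ⟨d, ρ, M, hρ, hρtr, hM, hpov, rfl⟩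
    exact GYNI.upper_bound d M hM hpov q hq ρ hρ hρtr
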